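/- For positive integers n, m, k with n dividing m, the generalized Davenport constant of Z/nZ × Z/mZ satisfies D_k(Z/nZ × Z/mZ) = km + n - 1. -/

import Mathlib

open Multiset

section helpers

variable {α β : Type*}

/-- pull back a sub-multiset along a map -/
lemma pullback_le_map (f : α → β) :
    ∀ (S : Multiset α) (T' : Multiset β), T' ≤ S.map f → ∃ T, T ≤ S ∧ T.map f = T' := by
  classical
  intro S
  induction S using Multiset.induction with
  | empty => intro T' h; simp only [Multiset.map_zero, Multiset.le_zero] at h
             exact ⟨0, le_refl _, by simp [h]⟩
  | cons a S ih =>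
    intro T' h
    rw [Multiset.map_cons] at h
    by_cases hm : f a ∈ T'
    · have h1 : T'.erase (f a) ≤ S.map f := by
        have := Multiset.erase_le_erase (f a) h
        rwa [Multiset.erase_cons_head] at this
      obtain ⟨T, hT, hTm⟩ := ih _ h1
      refine ⟨a ::ₘ T, Multiset.cons_le_cons _ hT, ?_⟩
      rw [Multiset.map_cons, hTm, Multiset.cons_erase hm]
    · have h1 : T' ≤ S.map f := by
        rw [Multiset.le_iff_count]
        intro b
        by_cases hb : b = f a
        · subst hb; simp [Multiset.count_eq_zero_of_notMem hm]
        · have := Multiset.le_iff_count.1 h b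
          rwa [Multiset.count_cons_of_ne hb] at this
      obtain ⟨T, hT, hTm⟩ := ih _ h1
      exact ⟨T, le_trans hT (Multiset.le_cons_self _ _), hTm⟩

lemma sum_sum_eq [AddCommMonoid α] (Q : Multiset (Multiset α)) :
    Q.sum.sum = (Q.map Multiset.sum).sum := by
  induction Q using Multiset.induction with
  | empty => simp
  | cons a Q ih => simp [ih]

lemma card_sum_eq (Q : Multiset (Multiset α)) :
    Multiset.card Q.sum = (Q.map (fun T => Multiset.card T)).sum := by
  induction Q using Multiset.induction with
  | empty => simp
  | cons a Q ih => simp [ih]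

lemma card_sum_le {a : ℕ} (Q : Multiset (Multiset α)) (h : ∀ T ∈ Q, Multiset.card T ≤ a) :
    Multiset.card Q.sum ≤ a * Multiset.card Q := by
  induction Q using Multiset.induction with
  | empty => simp
  | cons T Q ih =>
    simp only [Multiset.sum_cons, Multiset.card_add, Multiset.card_cons]
    have h1 := h T (Multiset.mem_cons_self _ _)
    have h2 := ih (fun T hT => h T (Multiset.mem_cons_of_mem hT))
    nlinarith

lemma card_le_card_sum (P : Multiset (Multiset α)) (h : ∀ T ∈ P, T ≠ 0) :
    Multiset.card P ≤ Multiset.card P.sum := by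
  induction P using Multiset.induction with
  | empty => simp
  | cons T P ih =>
    simp only [Multiset.sum_cons, Multiset.card_add, Multiset.card_cons]
    have h1 : 1 ≤ Multiset.card T := by
      have := h T (Multiset.mem_cons_self _ _)
      rwa [Nat.one_le_iff_ne_zero, Ne, Multiset.card_eq_zero]
    have h2 := ih (fun T hT => h T (Multiset.mem_cons_of_mem hT))
    omega

lemma mem_le_sum [AddCommMonoid α] [PartialOrder α] [CanonicallyOrderedAdd α]
    {Q : Multiset α} {T : α} (h : T ∈ Q) : T ≤ Q.sum := by
  obtain ⟨Q', rfl⟩ := Multiset.exists_cons_of_mem h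
  rw [Multiset.sum_cons]; exact le_self_add

end helpers
open Multiset

section helpers2
variable {α β : Type*}

/-- pigeonhole: any nonempty zero-sum sequence over a finite group contains a nonempty
zero-sum subsequence of length at most the cardinality of the group. -/
lemma exists_short_zero_sum [AddCommGroup α] [Fintype α] {S : Multiset α}
    (hsum : S.sum = 0) (hne : S ≠ 0) :
    ∃ T, T ≤ S ∧ T ≠ 0 ∧ T.sum = 0 ∧ Multiset.card T ≤ Fintype.card α := by
  set N := Fintype.card α with hN
  by_cases hle : Multiset.card S ≤ N
  · exact ⟨S, le_refl _, hne, hsum, hle⟩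
  push_neg at hle
  set l := S.toList with hl
  have hlen : l.length = Multiset.card S := Multiset.length_toList S
  have hSl : (l : Multiset α) = S := Multiset.coe_toList S
  suffices H : ∀ i j : Fin (N + 1), i.1 < j.1 →
      (l.take i.1).sum = (l.take j.1).sum →
      ∃ T, T ≤ S ∧ T ≠ 0 ∧ T.sum = 0 ∧ Multiset.card T ≤ N by
    have hcard : Fintype.card α < Fintype.card (Fin (N + 1)) := by simp; omega
    obtain ⟨i, j, hij, hps⟩ := Fintype.exists_ne_map_eq_of_card_lt
      (fun k : Fin (N + 1) => (l.take k.1).sum) hcard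
    have hne' : i.1 ≠ j.1 := fun h => hij (Fin.ext h)
    rcases hne'.lt_or_gt with h | h
    · exact H i j h hps
    · exact H j i h hps.symm
  intro i j hlt hps
  set T : List α := (l.drop i.1).take (j.1 - i.1) with hT
  have htake : l.take j.1 = l.take i.1 ++ T := by
    rw [hT, ← List.take_add]
    congr 1
    omega
  have hsumT : T.sum = 0 := by
    have h1 : (l.take j.1).sum = (l.take i.1).sum + T.sum := by
      rw [htake, List.sum_append]
    rw [← hps] at h1
    exact (left_eq_add.1 h1)
  have hTlen : 0 < T.length := by
    rw [hT, List.length_take, List.length_drop]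
    have h1 : i.1 < N + 1 := i.2
    have h2 : j.1 < N + 1 := j.2
    omega
  have hsub : T.Sublist l := ((l.drop i.1).take_sublist _).trans (l.drop_sublist _)
  refine ⟨(T : Multiset α), ?_, ?_, by simpa using hsumT, ?_⟩
  · rw [← hSl]
    exact Multiset.coe_le.2 hsub.subperm
  · have : Multiset.card (T : Multiset α) ≠ 0 := by
      rw [Multiset.coe_card]; omega
    intro h0; exact this (by rw [h0]; simp)
  · rw [Multiset.coe_card, hT, List.length_take]
    have h2 : j.1 < N + 1 := j.2
    omega

/-- any zero-sum sequence factors into nonempty zero-sum parts, with at least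
`card S / card α` parts. -/
lemma exists_factorization [AddCommGroup α] [Fintype α] :
    ∀ (L : ℕ) (S : Multiset α), Multiset.card S ≤ L → S.sum = 0 →
    ∃ P : Multiset (Multiset α), P.sum = S ∧ (∀ T ∈ P, T ≠ 0 ∧ T.sum = 0) ∧
      Multiset.card S ≤ Fintype.card α * Multiset.card P := by
  intro L
  induction L with
  | zero =>
    intro S hc _
    have : S = 0 := by rw [← Multiset.card_eq_zero]; omega
    subst this
    exact ⟨0, by simp, by simp, by simp⟩
  | succ L ih =>
    intro S hc hsum
    by_cases hne : S = 0
    · subst hne; exact ⟨0, by simp, by simp, by simp⟩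
    obtain ⟨T, hTle, hT0, hTsum, hTcard⟩ := exists_short_zero_sum hsum hne
    obtain ⟨S₂, rfl⟩ := Multiset.le_iff_exists_add.1 hTle
    have hT1 : 1 ≤ Multiset.card T := by
      rwa [Nat.one_le_iff_ne_zero, Ne, Multiset.card_eq_zero]
    have hs2 : S₂.sum = 0 := by
      have := hsum; rw [Multiset.sum_add, hTsum, zero_add] at this; exact this
    have hc2 : Multiset.card S₂ ≤ L := by
      rw [Multiset.card_add] at hc; omega
    obtain ⟨P₂, hP₂sum, hP₂parts, hP₂card⟩ := ih S₂ hc2 hs2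
    refine ⟨T ::ₘ P₂, by rw [Multiset.sum_cons, hP₂sum], ?_, ?_⟩
    · intro U hU
      rcases Multiset.mem_cons.1 hU with h | h
      · subst h; exact ⟨hT0, hTsum⟩
      · exact hP₂parts U h
    · rw [Multiset.card_add, Multiset.card_cons, Nat.mul_succ]
      omega

/-- greedy block extraction along a hom. -/
lemma blockify [AddCommGroup α] [AddCommGroup β] (f : α →+ β) (c e : ℕ) (hc : 0 < c)
    (H : ∀ S' : Multiset β, c ≤ Multiset.card S' →
      ∃ T', T' ≤ S' ∧ T' ≠ 0 ∧ T'.sum = 0 ∧ Multiset.card T' ≤ e) :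
    ∀ (L : ℕ) (S : Multiset α), Multiset.card S ≤ L →
    ∃ (P : Multiset (Multiset α)) (R : Multiset α), P.sum + R = S ∧
      (∀ T ∈ P, T ≠ 0 ∧ (T.map f).sum = 0 ∧ Multiset.card T ≤ e) ∧
      Multiset.card R < c := by
  intro L
  induction L with
  | zero =>
    intro S hc'
    have : S = 0 := by rw [← Multiset.card_eq_zero]; omega
    subst this
    exact ⟨0, 0, by simp, by simp, by simpa using hc⟩
  | succ L ih =>
    intro S hcard
    by_cases hlt : Multiset.card S < c
    · exact ⟨0, S, by simp, by simp, hlt⟩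
    push_neg at hlt
    have hcS : c ≤ Multiset.card (S.map f) := by rwa [Multiset.card_map]
    obtain ⟨T', hT'le, hT'0, hT'sum, hT'card⟩ := H (S.map f) hcS
    obtain ⟨T, hTle, hTmap⟩ := pullback_le_map f S T' hT'le
    obtain ⟨S₂, rfl⟩ := Multiset.le_iff_exists_add.1 hTle
    have hT0 : T ≠ 0 := by
      rintro rfl; rw [Multiset.map_zero] at hTmap; exact hT'0 hTmap.symm
    have hT1 : 1 ≤ Multiset.card T := by
      rwa [Nat.one_le_iff_ne_zero, Ne, Multiset.card_eq_zero]
    have hc2 : Multiset.card S₂ ≤ L := by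
      rw [Multiset.card_add] at hcard; omega
    obtain ⟨P₂, R, hP₂sum, hP₂parts, hR⟩ := ih S₂ hc2
    refine ⟨T ::ₘ P₂, R, ?_, ?_, hR⟩
    · rw [Multiset.sum_cons, add_assoc, hP₂sum]
    · intro U hU
      rcases Multiset.mem_cons.1 hU with h | h
      · subst h
        exact ⟨hT0, by rw [hTmap]; exact hT'sum, by rw [← hTmap, Multiset.card_map] at hT'card; exact hT'card⟩
      · exact hP₂parts U h

/-- pull back a partition of a mapped multiset. -/
lemma pullback_partition (φ : α → β) :
    ∀ (PZ : Multiset (Multiset β)) (B : Multiset α), PZ.sum = B.map φ →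
    ∃ PB : Multiset (Multiset α), PB.sum = B ∧ PB.map (fun Q => Q.map φ) = PZ := by
  intro PZ
  induction PZ using Multiset.induction with
  | empty =>
    intro B h
    have : B = 0 := by
      have := h.symm
      rwa [Multiset.sum_zero, Multiset.map_eq_zero] at this
    subst this
    exact ⟨0, by simp, by simp⟩
  | cons Z PZ ih =>
    intro B h
    rw [Multiset.sum_cons] at h
    have hZle : Z ≤ B.map φ := by rw [← h]; exact le_self_add
    obtain ⟨N, hNle, hNmap⟩ := pullback_le_map φ B Z hZle
    obtain ⟨B', rfl⟩ := Multiset.le_iff_exists_add.1 hNle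
    have h2 : PZ.sum = B'.map φ := by
      rw [Multiset.map_add, ← hNmap] at h
      exact add_left_cancel h
    obtain ⟨PB', hPB'sum, hPB'map⟩ := ih B' h2
    exact ⟨N ::ₘ PB', by rw [Multiset.sum_cons, hPB'sum], by
      rw [Multiset.map_cons, hNmap, hPB'map]⟩

end helpers2
open Multiset

section zmodhoms

/-- multiplication by `a` as a hom `ZMod b →+ ZMod c` where `a * b = c`. -/
def mulValHom (a : ℕ) {b c : ℕ} [NeZero b] [NeZero c] (h : a * b = c) : ZMod b →+ ZMod c :=
  AddMonoidHom.mk' (fun z => (a : ZMod c) * ((z.val : ℕ) : ZMod c)) (by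
    intro x y
    have hab : (a : ZMod c) * (b : ZMod c) = 0 := by
      have : ((a * b : ℕ) : ZMod c) = ((c : ℕ) : ZMod c) := by rw [h]
      rw [ZMod.natCast_self] at this
      push_cast at this
      exact this
    rw [ZMod.val_add]
    set s := x.val + y.val with hs
    have hmod : (b : ZMod c) * ((s / b : ℕ) : ZMod c) + ((s % b : ℕ) : ZMod c) = ((s : ℕ) : ZMod c) := by
      have := congrArg (fun t : ℕ => (t : ZMod c)) (Nat.div_add_mod s b)
      push_cast at this
      exact this
    have hrhs : (a : ZMod c) * ((x.val : ℕ) : ZMod c) + (a : ZMod c) * ((y.val : ℕ) : ZMod c)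
        = (a : ZMod c) * ((s : ℕ) : ZMod c) := by
      rw [hs]; push_cast; ring
    rw [hrhs, ← hmod, mul_add, ← mul_assoc, hab, zero_mul, zero_add])

lemma mulValHom_apply (a : ℕ) {b c : ℕ} [NeZero b] [NeZero c] (h : a * b = c) (z : ZMod b) :
    mulValHom a h z = (a : ZMod c) * ((z.val : ℕ) : ZMod c) := rfl

lemma mulValHom_spec (a : ℕ) {b c : ℕ} [NeZero b] [NeZero c] (h : a * b = c) (ha : 0 < a)
    (y : ZMod c) (hy : a ∣ y.val) : mulValHom a h (((y.val / a : ℕ) : ZMod b)) = y := by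
  have hvlt : y.val < c := ZMod.val_lt y
  have hlt : y.val / a < b := by
    apply Nat.div_lt_of_lt_mul
    omega
  rw [mulValHom_apply, ZMod.val_natCast, Nat.mod_eq_of_lt hlt]
  rw [← Nat.cast_mul, Nat.mul_div_cancel' hy]
  rw [ZMod.natCast_val, ZMod.cast_id]

lemma mulValHom_eq_zero_iff (a : ℕ) {b c : ℕ} [NeZero b] [NeZero c] (h : a * b = c)
    (ha : 0 < a) (z : ZMod b) : mulValHom a h z = 0 ↔ z = 0 := by
  constructor
  · intro h0
    rw [mulValHom_apply, ← Nat.cast_mul] at h0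
    rw [ZMod.natCast_eq_zero_iff] at h0
    have hvlt : z.val < b := ZMod.val_lt z
    have hlt : a * z.val < c := by
      calc a * z.val < a * b := by exact Nat.mul_lt_mul_of_pos_left hvlt ha
      _ = c := h
    have h00 : a * z.val = 0 := Nat.eq_zero_of_dvd_of_lt h0 hlt
    have hz : z.val = 0 := by
      rcases Nat.mul_eq_zero.1 h00 with h' | h'
      · omega
      · exact h'
    exact (ZMod.val_eq_zero z).1 hz
  · rintro rfl; simp [mulValHom_apply]

lemma castHom_eq_zero_dvd {a c : ℕ} [NeZero a] [NeZero c] (hac : a ∣ c) (y : ZMod c)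
    (hy : ZMod.castHom hac (ZMod a) y = 0) : a ∣ y.val := by
  rw [ZMod.castHom_apply, ← ZMod.natCast_val] at hy
  rwa [ZMod.natCast_eq_zero_iff] at hy

end zmodhoms
open Multiset

section primecase

lemma finset_get_le {α : Type*} (l : List α) (idx : Finset (Fin l.length)) :
    (idx.val.map l.get) ≤ (l : Multiset α) := by
  have h1 : idx.val ≤ (Finset.univ : Finset (Fin l.length)).val :=
    Finset.val_le_iff.2 (Finset.subset_univ idx)
  have h2 := Multiset.map_le_map (f := l.get) h1
  refine le_trans h2 ?_
  rw [Fin.univ_val_map]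
  rw [List.ofFn_get]

lemma cw_core {p : ℕ} (hp : p.Prime) {r : ℕ} (c : Fin r → (ZMod p × ZMod p) → ZMod p)
    (l : List (ZMod p × ZMod p)) (hlen : r * (p - 1) < l.length) :
    ∃ idx : Finset (Fin l.length), idx.Nonempty ∧
      ∀ j : Fin r, ∑ i ∈ idx, c j (l.get i) = 0 := by
  haveI := Fact.mk hp
  have hp1 : p - 1 ≠ 0 := by have := hp.two_le; omega
  set f : Fin r → MvPolynomial (Fin l.length) (ZMod p) :=
    fun j => ∑ i : Fin l.length, MvPolynomial.C (c j (l.get i)) * (MvPolynomial.X i) ^ (p - 1)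
    with hf
  have hdeg : ∀ j, (f j).totalDegree ≤ p - 1 := by
    intro j
    refine le_trans (MvPolynomial.totalDegree_finset_sum _ _) ?_
    refine Finset.sup_le fun i _ => ?_
    refine le_trans (MvPolynomial.totalDegree_mul _ _) ?_
    rw [MvPolynomial.totalDegree_C, zero_add]
    refine le_trans (MvPolynomial.totalDegree_pow _ _) ?_
    rw [MvPolynomial.totalDegree_X]
    omega
  have hsum : (∑ j : Fin r, (f j).totalDegree) < Fintype.card (Fin l.length) := by
    rw [Fintype.card_fin]
    calc (∑ j : Fin r, (f j).totalDegree) ≤ ∑ _j : Fin r, (p - 1) :=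
          Finset.sum_le_sum (fun j _ => hdeg j)
      _ = r * (p - 1) := by rw [Finset.sum_const, Finset.card_univ, Fintype.card_fin, smul_eq_mul]
      _ < l.length := hlen
  have hdvd := char_dvd_card_solutions_of_sum_lt (K := ZMod p)
    (σ := Fin l.length) (ι := Fin r) p (s := Finset.univ) (f := f) (by simpa using hsum)
  have hzero : ∀ j ∈ Finset.univ, MvPolynomial.eval (0 : Fin l.length → ZMod p) (f j) = 0 := by
    intro j _
    rw [hf]
    simp only [MvPolynomial.eval_sum, MvPolynomial.eval_mul, MvPolynomial.eval_C,
      MvPolynomial.eval_pow, MvPolynomial.eval_X, Pi.zero_apply, zero_pow hp1, mul_zero,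
      Finset.sum_const_zero]
  -- there exists a nonzero solution
  have hex : ∃ x : Fin l.length → ZMod p,
      (∀ j ∈ Finset.univ, MvPolynomial.eval x (f j) = 0) ∧ x ≠ 0 := by
    by_contra hcon
    push_neg at hcon
    haveI hsub : Subsingleton { x : Fin l.length → ZMod p //
        ∀ j ∈ Finset.univ, MvPolynomial.eval x (f j) = 0 } := by
      constructor
      rintro ⟨x, hx⟩ ⟨y, hy⟩
      have hx0 := hcon x hx
      have hy0 := hcon y hy
      subst hx0; subst hy0; rfl
    haveI := uniqueOfSubsingleton
      (⟨0, hzero⟩ : { x : Fin l.length → ZMod p //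
        ∀ j ∈ Finset.univ, MvPolynomial.eval x (f j) = 0 })
    have hdvd2 : p ∣ Fintype.card { x : Fin l.length → ZMod p //
        ∀ j ∈ Finset.univ, MvPolynomial.eval x (f j) = 0 } := by
      convert hdvd using 2 <;> first | rfl | exact Subsingleton.elim _ _
    rw [Fintype.card_unique] at hdvd2
    have := Nat.dvd_one.1 hdvd2
    have := hp.two_le
    omega
  obtain ⟨x, hxsol, hxne⟩ := hex
  classical
  set idx : Finset (Fin l.length) := Finset.univ.filter (fun i => x i ≠ 0) with hidx
  have hidxne : idx.Nonempty := by
    rw [Finset.filter_nonempty_iff]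
    obtain ⟨i, hi⟩ := Function.ne_iff.1 hxne
    exact ⟨i, Finset.mem_univ i, hi⟩
  refine ⟨idx, hidxne, fun j => ?_⟩
  have heval := hxsol j (Finset.mem_univ j)
  rw [hf] at heval
  simp only [MvPolynomial.eval_sum, MvPolynomial.eval_mul, MvPolynomial.eval_C,
    MvPolynomial.eval_pow, MvPolynomial.eval_X] at heval
  rw [← Finset.sum_filter_add_sum_filter_not Finset.univ (fun i => x i ≠ 0)] at heval
  have h2 : ∑ i ∈ Finset.univ.filter (fun i => ¬ x i ≠ 0),
      c j (l.get i) * x i ^ (p - 1) = 0 := by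
    refine Finset.sum_eq_zero fun i hi => ?_
    rw [Finset.mem_filter] at hi
    have : x i = 0 := by simpa using hi.2
    rw [this, zero_pow hp1, mul_zero]
  rw [h2, add_zero] at heval
  rw [← heval]
  refine Finset.sum_congr rfl fun i hi => ?_
  rw [Finset.mem_filter] at hi
  rw [ZMod.pow_card_sub_one_eq_one hi.2, mul_one]

lemma prime_D {p : ℕ} (hp : p.Prime) (S : Multiset (ZMod p × ZMod p))
    (hcard : 2 * p - 1 ≤ Multiset.card S) :
    ∃ T, T ≤ S ∧ T ≠ 0 ∧ T.sum = 0 := by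
  set l := S.toList with hl
  have hSl : (l : Multiset (ZMod p × ZMod p)) = S := Multiset.coe_toList S
  have hlen : 2 * (p - 1) < l.length := by
    have h1 : l.length = Multiset.card S := Multiset.length_toList S
    have := hp.two_le
    omega
  obtain ⟨idx, hne, hzero⟩ := cw_core hp ![Prod.fst, Prod.snd] l hlen
  refine ⟨idx.val.map l.get, by rw [← hSl]; exact finset_get_le l idx, ?_, ?_⟩
  · intro h0
    have := congrArg Multiset.card h0
    rw [Multiset.card_map, Multiset.card_zero] at this
    exact Finset.Nonempty.ne_empty hne (Finset.card_eq_zero.1 this)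
  · have hsum : (idx.val.map l.get).sum = ∑ i ∈ idx, l.get i := rfl
    rw [hsum]
    have h0 := hzero 0
    have h1 := hzero 1
    simp only [Matrix.cons_val_zero, Matrix.cons_val_one, Matrix.head_cons] at h0 h1
    refine Prod.ext ?_ ?_
    · rw [Prod.fst_sum]; exact h0
    · rw [Prod.snd_sum]; exact h1

lemma prime_eta {p : ℕ} (hp : p.Prime) (S : Multiset (ZMod p × ZMod p))
    (hcard : 3 * p - 2 ≤ Multiset.card S) :
    ∃ T, T ≤ S ∧ T ≠ 0 ∧ T.sum = 0 ∧ Multiset.card T ≤ p := by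
  have hp2 := hp.two_le
  set l := (S.toList.take (3 * p - 2)) with hl
  have hllen : l.length = 3 * p - 2 := by
    rw [hl, List.length_take, Multiset.length_toList]
    omega
  have hlS : (l : Multiset (ZMod p × ZMod p)) ≤ S := by
    have h1 : l.Sublist S.toList := List.take_sublist _ _
    have := Multiset.coe_le.2 h1.subperm
    rwa [Multiset.coe_toList] at this
  have hlen : 3 * (p - 1) < l.length := by omega
  obtain ⟨idx, hne, hzero⟩ := cw_core hp ![Prod.fst, Prod.snd, fun _ => 1] l hlen
  set T : Multiset (ZMod p × ZMod p) := idx.val.map l.get with hT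
  have hTle : T ≤ S := le_trans (finset_get_le l idx) hlS
  have hTne : T ≠ 0 := by
    intro h0
    have := congrArg Multiset.card h0
    rw [hT, Multiset.card_map, Multiset.card_zero] at this
    exact Finset.Nonempty.ne_empty hne (Finset.card_eq_zero.1 this)
  have hTsum : T.sum = 0 := by
    have hsum : T.sum = ∑ i ∈ idx, l.get i := rfl
    rw [hsum]
    have h0 := hzero 0
    have h1 := hzero 1
    simp only [Matrix.cons_val_zero, Matrix.cons_val_one, Matrix.head_cons] at h0 h1
    refine Prod.ext ?_ ?_
    · rw [Prod.fst_sum]; exact h0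
    · rw [Prod.snd_sum]; exact h1
  have hTcard : Multiset.card T = idx.card := by rw [hT, Multiset.card_map]; rfl
  have hpdvd : p ∣ Multiset.card T := by
    have h2 := hzero 2
    simp only [Matrix.cons_val_two, Matrix.tail_cons, Matrix.head_cons] at h2
    rw [Finset.sum_const, nsmul_eq_mul, mul_one] at h2
    rw [hTcard]
    exact (ZMod.natCast_eq_zero_iff _ _).1 h2
  have hTcard_le : Multiset.card T ≤ 3 * p - 2 := by
    rw [hTcard]
    calc idx.card ≤ Finset.univ.card := Finset.card_le_card (Finset.subset_univ idx)
      _ = l.length := by rw [Finset.card_univ, Fintype.card_fin]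
      _ = 3 * p - 2 := hllen
  obtain ⟨d, hd⟩ := hpdvd
  have hTpos : 0 < Multiset.card T := Multiset.card_pos.2 hTne
  have hd2 : d ≤ 2 := by
    by_contra hcon
    push_neg at hcon
    have : 3 * p ≤ p * d := by
      calc 3 * p = p * 3 := by ring
        _ ≤ p * d := Nat.mul_le_mul_left p hcon
    omega
  interval_cases d
  · omega
  · exact ⟨T, hTle, hTne, hTsum, by omega⟩
  · -- card T = 2p : split into two pieces, one has length ≤ p
    have hcT : Multiset.card T = 2 * p := by omega
    obtain ⟨a, ha⟩ := Multiset.card_pos_iff_exists_mem.1 hTpos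
    obtain ⟨T₁, hseq⟩ := Multiset.exists_cons_of_mem ha
    have hT₁card : Multiset.card T₁ = 2 * p - 1 := by
      have := congrArg Multiset.card hseq
      rw [Multiset.card_cons] at this
      omega
    obtain ⟨U, hUle, hUne, hUsum⟩ := prime_D hp T₁ (by omega)
    have hUleT : U ≤ T := by
      rw [hseq]; exact le_trans hUle (Multiset.le_cons_self _ _)
    obtain ⟨W, hW⟩ := Multiset.le_iff_exists_add.1 hUleT
    have hWsum : W.sum = 0 := by
      have := hTsum
      rw [hW, Multiset.sum_add, hUsum, zero_add] at this
      exact this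
    have hUcard : Multiset.card U ≤ 2 * p - 1 := by
      have := Multiset.card_le_card hUle
      omega
    have hcards : Multiset.card U + Multiset.card W = 2 * p := by
      have := congrArg Multiset.card hW
      rw [Multiset.card_add] at this
      omega
    by_cases hUp : Multiset.card U ≤ p
    · exact ⟨U, le_trans hUleT hTle, hUne, hUsum, hUp⟩
    · refine ⟨W, ?_, ?_, hWsum, by omega⟩
      · refine le_trans ?_ hTle
        rw [hW]; exact le_add_self
      · intro h0
        rw [h0, Multiset.card_zero] at hcards
        omega

end primecase
open Multiset

section select

variable {A B C : Type*} [AddCommGroup A] [AddCommGroup B] [AddCommGroup C]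

lemma sum_of_pullback (f2 : C →+ A) (γ : Multiset A → C) (Q : Multiset (Multiset A))
    (h : ∀ T ∈ Q, f2 (γ T) = T.sum) : (Q.sum).sum = f2 ((Q.map γ).sum) := by
  rw [sum_sum_eq, map_multiset_sum f2, Multiset.map_map]
  exact congrArg Multiset.sum (Multiset.map_congr rfl (fun T hT => (h T hT).symm))

lemma select_blocks (q : A →+ B) (f2 : C →+ A) (ivf : A → C)
    (hsurj : ∀ y : A, q y = 0 → f2 (ivf y) = y)
    (blocks : Multiset (Multiset A)) (hparts : ∀ T ∈ blocks, T ≠ 0 ∧ (T.map q).sum = 0)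
    (W : Multiset C) (hWle : W ≤ blocks.map (fun T => ivf T.sum))
    (hW0 : W ≠ 0) (hWsum : W.sum = 0) :
    ∃ Q, Q ≤ blocks ∧ Multiset.card Q = Multiset.card W ∧ Q.sum ≠ 0 ∧ (Q.sum).sum = 0 := by
  obtain ⟨Q, hQle, hQmap⟩ := pullback_le_map (fun T => ivf T.sum) blocks W hWle
  have hkey : ∀ T ∈ Q, f2 (ivf T.sum) = T.sum := by
    intro T hT
    have hTB := Multiset.mem_of_le hQle hT
    have hq0 : q T.sum = 0 := by
      rw [map_multiset_sum q]
      exact (hparts T hTB).2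
    exact hsurj _ hq0
  refine ⟨Q, hQle, by rw [← hQmap, Multiset.card_map], ?_, ?_⟩
  · have hQ0 : Q ≠ 0 := by rintro rfl; rw [Multiset.map_zero] at hQmap; exact hW0 hQmap.symm
    obtain ⟨T, hT⟩ := Multiset.exists_mem_of_ne_zero hQ0
    have hT0 : T ≠ 0 := (hparts T (Multiset.mem_of_le hQle hT)).1
    intro h0
    have hle := mem_le_sum hT
    rw [h0, Multiset.le_zero] at hle
    exact hT0 hle
  · rw [sum_of_pullback f2 (fun T => ivf T.sum) Q hkey, hQmap, hWsum]
    exact map_zero f2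

end select
open Multiset

theorem DE_bound : ∀ n : ℕ, 0 < n →
    (∀ S : Multiset (ZMod n × ZMod n), 2 * n - 1 ≤ Multiset.card S →
      ∃ T, T ≤ S ∧ T ≠ 0 ∧ T.sum = 0) ∧
    (∀ S : Multiset (ZMod n × ZMod n), 3 * n - 2 ≤ Multiset.card S →
      ∃ T, T ≤ S ∧ T ≠ 0 ∧ T.sum = 0 ∧ Multiset.card T ≤ n) := by
  intro n
  induction n using Nat.strong_induction_on with
  | _ n ih =>
  intro hn
  by_cases hn1 : n = 1
  · subst hn1
    have hsing : ∀ x : ZMod 1 × ZMod 1, x = 0 := fun x => Subsingleton.elim x 0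
    constructor
    · intro S hcard
      have hS0 : S ≠ 0 := by
        intro h0; rw [h0] at hcard; simp at hcard
      obtain ⟨a, ha⟩ := Multiset.exists_mem_of_ne_zero hS0
      exact ⟨{a}, Multiset.singleton_le.2 ha, by simp,
        by rw [Multiset.sum_singleton]; exact hsing a⟩
    · intro S hcard
      have hS0 : S ≠ 0 := by
        intro h0; rw [h0] at hcard; simp at hcard
      obtain ⟨a, ha⟩ := Multiset.exists_mem_of_ne_zero hS0
      exact ⟨{a}, Multiset.singleton_le.2 ha, by simp,
        by rw [Multiset.sum_singleton]; exact hsing a, by simp⟩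
  by_cases hp : n.Prime
  · exact ⟨fun S h => prime_D hp S h, fun S h => prime_eta hp S h⟩
  -- composite case
  have hn2 : 2 ≤ n := by omega
  obtain ⟨a, hadvd, ha2, haltn⟩ := Nat.exists_dvd_of_not_prime2 hn2 hp
  obtain ⟨b, hnb⟩ := hadvd
  have hab : a * b = n := hnb.symm
  have hb0 : b ≠ 0 := by rintro h; rw [h, mul_zero] at hab; omega
  have hb1 : b ≠ 1 := by rintro h; rw [h, mul_one] at hab; omega
  have hb2 : 2 ≤ b := by omega
  have h2b : 2 * b ≤ n := by rw [← hab]; exact Nat.mul_le_mul_right b ha2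
  have hbltn : b < n := by omega
  obtain ⟨Da, Ea⟩ := ih a haltn (by omega)
  obtain ⟨Db, Eb⟩ := ih b hbltn (by omega)
  haveI : NeZero a := ⟨by omega⟩
  haveI : NeZero b := ⟨by omega⟩
  haveI : NeZero n := ⟨by omega⟩
  have hdvd : a ∣ n := Dvd.intro b hnb.symm
  set q : (ZMod n × ZMod n) →+ (ZMod a × ZMod a) :=
    AddMonoidHom.prodMap (ZMod.castHom hdvd (ZMod a)).toAddMonoidHom
      (ZMod.castHom hdvd (ZMod a)).toAddMonoidHom with hq
  set f2 : (ZMod b × ZMod b) →+ (ZMod n × ZMod n) :=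
    AddMonoidHom.prodMap (mulValHom a hab) (mulValHom a hab) with hf2
  set iv2 : (ZMod n × ZMod n) → (ZMod b × ZMod b) :=
    fun y => (((y.1.val / a : ℕ) : ZMod b), ((y.2.val / a : ℕ) : ZMod b)) with hiv2
  have hsurj : ∀ y : ZMod n × ZMod n, q y = 0 → f2 (iv2 y) = y := by
    intro y hy
    have h1 : ZMod.castHom hdvd (ZMod a) y.1 = 0 ∧ ZMod.castHom hdvd (ZMod a) y.2 = 0 :=
      ⟨congrArg Prod.fst hy, congrArg Prod.snd hy⟩
    have hd1 := castHom_eq_zero_dvd hdvd y.1 h1.1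
    have hd2 := castHom_eq_zero_dvd hdvd y.2 h1.2
    exact Prod.ext_iff.2
      ⟨mulValHom_spec a hab (by omega) y.1 hd1, mulValHom_spec a hab (by omega) y.2 hd2⟩
  -- η for the quotient as input for blockify
  have hEa : ∀ S' : Multiset (ZMod a × ZMod a), 3 * a - 2 ≤ Multiset.card S' →
      ∃ T', T' ≤ S' ∧ T' ≠ 0 ∧ T'.sum = 0 ∧ Multiset.card T' ≤ a := Ea
  constructor
  -- D part
  · intro S hcard
    obtain ⟨P, R, hPR, hparts, hRlt⟩ :=
      blockify q (3 * a - 2) a (by omega) hEa (Multiset.card S) S le_rfl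
    have hPsum_le : Multiset.card P.sum ≤ a * Multiset.card P :=
      card_sum_le P (fun T hT => (hparts T hT).2.2)
    have hsplit : Multiset.card P.sum + Multiset.card R = Multiset.card S := by
      rw [← hPR, Multiset.card_add]
    have hblocks : ∃ blocks : Multiset (Multiset (ZMod n × ZMod n)),
        blocks.sum ≤ S ∧ (∀ T ∈ blocks, T ≠ 0 ∧ (T.map q).sum = 0) ∧
        2 * b - 1 ≤ Multiset.card blocks := by
      by_cases hR2 : 2 * a - 1 ≤ Multiset.card R
      · -- extract one more block from R
        obtain ⟨U', hU'le, hU'0, hU'sum⟩ := Da (R.map q) (by rwa [Multiset.card_map])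
        obtain ⟨U, hUle, hUmap⟩ := pullback_le_map q R U' hU'le
        refine ⟨U ::ₘ P, ?_, ?_, ?_⟩
        · rw [Multiset.sum_cons, ← hPR, add_comm U P.sum]
          exact add_le_add_right hUle P.sum
        · intro T hT
          rcases Multiset.mem_cons.1 hT with h | h
          · subst h
            constructor
            · rintro rfl; rw [Multiset.map_zero] at hUmap; exact hU'0 hUmap.symm
            · rw [hUmap]; exact hU'sum
          · exact ⟨(hparts T h).1, (hparts T h).2.1⟩
        · have hkey : a * (2 * b - 3) + a * 3 = 2 * n := by
            rw [← Nat.mul_add]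
            have h1 : 2 * b - 3 + 3 = 2 * b := by omega
            rw [h1, ← hab]; ring
          have hB : 2 * n + 2 ≤ Multiset.card P.sum + 3 * a := by omega
          have hlt : a * (2 * b - 3) < a * Multiset.card P := by omega
          have := Nat.lt_of_mul_lt_mul_left hlt
          rw [Multiset.card_cons]
          omega
      · refine ⟨P, ?_, fun T hT => ⟨(hparts T hT).1, (hparts T hT).2.1⟩, ?_⟩
        · rw [← hPR]; exact le_add_self.trans (le_of_eq (add_comm _ _))
        · have hkey : a * (2 * b - 2) + a * 2 = 2 * n := by
            rw [← Nat.mul_add]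
            have h1 : 2 * b - 2 + 2 = 2 * b := by omega
            rw [h1, ← hab]; ring
          have hB : 2 * n + 1 ≤ Multiset.card P.sum + 2 * a := by omega
          have hlt : a * (2 * b - 2) < a * Multiset.card P := by omega
          have := Nat.lt_of_mul_lt_mul_left hlt
          omega
    obtain ⟨blocks, hble, hbparts, hbcard⟩ := hblocks
    obtain ⟨W, hWle, hW0, hWsum⟩ := Db (blocks.map (fun T => iv2 T.sum))
      (by rw [Multiset.card_map]; omega)
    obtain ⟨Q, hQle, hQcard, hQne, hQsum⟩ :=
      select_blocks q f2 iv2 hsurj blocks hbparts W hWle hW0 hWsum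
    refine ⟨Q.sum, ?_, hQne, hQsum⟩
    obtain ⟨Q', hQ'⟩ := Multiset.le_iff_exists_add.1 hQle
    calc Q.sum ≤ Q.sum + Q'.sum := le_self_add
      _ = blocks.sum := by rw [hQ', Multiset.sum_add]
      _ ≤ S := hble
  -- η part
  · intro S hcard
    obtain ⟨P, R, hPR, hparts, hRlt⟩ :=
      blockify q (3 * a - 2) a (by omega) hEa (Multiset.card S) S le_rfl
    have hPsum_le : Multiset.card P.sum ≤ a * Multiset.card P :=
      card_sum_le P (fun T hT => (hparts T hT).2.2)
    have hsplit : Multiset.card P.sum + Multiset.card R = Multiset.card S := by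
      rw [← hPR, Multiset.card_add]
    have hPcard : 3 * b - 2 ≤ Multiset.card P := by
      have hkey : a * (3 * b - 3) + a * 3 = 3 * n := by
        rw [← Nat.mul_add]
        have h1 : 3 * b - 3 + 3 = 3 * b := by omega
        rw [h1, ← hab]; ring
      have hB : 3 * n + 1 ≤ Multiset.card P.sum + 3 * a := by omega
      have hlt : a * (3 * b - 3) < a * Multiset.card P := by omega
      have := Nat.lt_of_mul_lt_mul_left hlt
      omega
    obtain ⟨W, hWle, hW0, hWsum, hWcard⟩ := Eb (P.map (fun T => iv2 T.sum))
      (by rw [Multiset.card_map]; omega)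
    obtain ⟨Q, hQle, hQcard, hQne, hQsum⟩ :=
      select_blocks q f2 iv2 hsurj P
        (fun T hT => ⟨(hparts T hT).1, (hparts T hT).2.1⟩) W hWle hW0 hWsum
    refine ⟨Q.sum, ?_, hQne, hQsum, ?_⟩
    · obtain ⟨Q', hQ'⟩ := Multiset.le_iff_exists_add.1 hQle
      calc Q.sum ≤ Q.sum + Q'.sum := le_self_add
        _ = P.sum := by rw [hQ', Multiset.sum_add]
        _ ≤ S := by rw [← hPR]; exact le_self_add
    · have hQsum_le : Multiset.card Q.sum ≤ a * Multiset.card Q :=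
        card_sum_le Q (fun T hT => (hparts T (Multiset.mem_of_le hQle hT)).2.2)
      calc Multiset.card Q.sum ≤ a * Multiset.card Q := hQsum_le
        _ ≤ a * b := by
            rw [hQcard]
            exact Nat.mul_le_mul_left a (hWcard.trans (le_refl b))
        _ = n := hab
open Multiset

lemma nat_le_sum_of_forall_le (s : Multiset ℕ) (c : ℕ) (h : ∀ x ∈ s, c ≤ x) :
    Multiset.card s * c ≤ s.sum := by
  induction s using Multiset.induction with
  | empty => simp
  | cons a s ih =>
    simp only [Multiset.sum_cons, Multiset.card_cons]
    have h1 := h a (Multiset.mem_cons_self _ _)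
    have h2 := ih (fun x hx => h x (Multiset.mem_cons_of_mem hx))
    calc (Multiset.card s + 1) * c = c + Multiset.card s * c := by ring
      _ ≤ a + s.sum := add_le_add h1 h2

lemma card_filter_sum {α : Type*} (p : α → Prop) [DecidablePred p]
    (P : Multiset (Multiset α)) :
    Multiset.card (P.sum.filter p) = (P.map (fun T => Multiset.card (T.filter p))).sum := by
  induction P using Multiset.induction with
  | empty => simp
  | cons T P ih => simp [Multiset.filter_add, ih]

/-- The upper bound construction: a zero-sum sequence of length `≥ k*m + n` splits into
at least `k+1` nonempty zero-sum parts. -/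
lemma upper_part (n m k t : ℕ) (hn : 0 < n) (hm : 0 < m) (hk : 1 ≤ k) (hnm : n ∣ m)
    (hmt : n * t = m) (ht : 0 < t)
    (S : Multiset (ZMod n × ZMod m)) (hsum : S.sum = 0) (hbig : k * m + n ≤ Multiset.card S) :
    ∃ P : Multiset (Multiset (ZMod n × ZMod m)), P.sum = S ∧
      (∀ T ∈ P, T ≠ 0 ∧ T.sum = 0) ∧ k + 1 ≤ Multiset.card P := by
  haveI : NeZero n := ⟨by omega⟩
  haveI : NeZero m := ⟨by omega⟩
  haveI : NeZero t := ⟨by omega⟩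
  set π : (ZMod n × ZMod m) →+ (ZMod n × ZMod n) :=
    AddMonoidHom.prodMap (AddMonoidHom.id (ZMod n)) (ZMod.castHom hnm (ZMod n)).toAddMonoidHom
    with hπ
  set g : ZMod t →+ (ZMod n × ZMod m) :=
    AddMonoidHom.prod 0 (mulValHom n hmt) with hg
  set ivg : (ZMod n × ZMod m) → ZMod t := fun y => ((y.2.val / n : ℕ) : ZMod t) with hivg
  have hsurj : ∀ y : ZMod n × ZMod m, π y = 0 → g (ivg y) = y := by
    intro y hy
    have h1 : y.1 = 0 := congrArg Prod.fst hy
    have h2 : ZMod.castHom hnm (ZMod n) y.2 = 0 := congrArg Prod.snd hy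
    have hd2 := castHom_eq_zero_dvd hnm y.2 h2
    exact Prod.ext_iff.2 ⟨h1.symm, mulValHom_spec n hmt (by omega) y.2 hd2⟩
  have hginj : ∀ z : ZMod t, g z = 0 → z = 0 := by
    intro z hz
    have h2 : mulValHom n hmt z = 0 := congrArg Prod.snd hz
    exact (mulValHom_eq_zero_iff n hmt (by omega) z).1 h2
  obtain ⟨Dn, En⟩ := DE_bound n hn
  obtain ⟨P, R, hPR, hparts, hRlt⟩ :=
    blockify π (3 * n - 2) n (by omega) En (Multiset.card S) S le_rfl
  have hPsum_le : Multiset.card P.sum ≤ n * Multiset.card P :=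
    card_sum_le P (fun T hT => (hparts T hT).2.2)
  have hsplit : Multiset.card P.sum + Multiset.card R = Multiset.card S := by
    rw [← hPR, Multiset.card_add]
  -- the remainder R also has zero π-sum
  have hπP : ∀ T ∈ P, π T.sum = 0 := by
    intro T hT
    rw [map_multiset_sum π]
    exact (hparts T hT).2.1
  have hRq : (R.map π).sum = 0 := by
    have h0 : π S.sum = 0 := by rw [hsum]; exact map_zero π
    have h1 : S.sum = P.sum.sum + R.sum := by rw [← hPR, Multiset.sum_add]
    have h2 : π P.sum.sum = 0 := by
      rw [sum_sum_eq, map_multiset_sum π, Multiset.map_map]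
      apply Multiset.sum_eq_zero
      intro x hx
      obtain ⟨T, hT, rfl⟩ := Multiset.mem_map.1 hx
      exact hπP T hT
    rw [h1, _root_.map_add, h2, zero_add] at h0
    rw [← map_multiset_sum π]
    exact h0
  -- build the full block decomposition B with B.sum = S and many blocks
  have hblocks : ∃ B : Multiset (Multiset (ZMod n × ZMod m)),
      B.sum = S ∧ (∀ T ∈ B, T ≠ 0 ∧ (T.map π).sum = 0) ∧
      k * t + 1 ≤ Multiset.card B := by
    by_cases hR0 : R = 0
    · refine ⟨P, by rw [← hPR, hR0, add_zero], fun T hT => ⟨(hparts T hT).1, (hparts T hT).2.1⟩, ?_⟩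
      have hkey : n * (k * t) + n * 1 = k * m + n := by rw [mul_one, ← hmt]; ring
      have hcS : Multiset.card P.sum = Multiset.card S := by
        rw [hR0] at hsplit; simpa using hsplit
      have hlt : n * (k * t) < n * Multiset.card P := by omega
      have := Nat.lt_of_mul_lt_mul_left hlt
      omega
    by_cases hR2 : Multiset.card R ≤ 2 * n - 1
    · refine ⟨R ::ₘ P, ?_, ?_, ?_⟩
      · rw [Multiset.sum_cons, ← hPR, add_comm R P.sum]
      · intro T hT
        rcases Multiset.mem_cons.1 hT with h | h
        · subst h; exact ⟨hR0, hRq⟩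
        · exact ⟨(hparts T h).1, (hparts T h).2.1⟩
      · have hkt : 1 ≤ k * t := Nat.mul_pos hk ht
        have hkey : n * (k * t - 1) + n * 1 = k * m := by
          rw [← Nat.mul_add]
          have h1 : k * t - 1 + 1 = k * t := by omega
          rw [h1, ← hmt]; ring
        have hlt : n * (k * t - 1) < n * Multiset.card P := by omega
        have := Nat.lt_of_mul_lt_mul_left hlt
        rw [Multiset.card_cons]
        omega
    · -- split R into two blocks
      push_neg at hR2
      have hR2' : 2 * n ≤ Multiset.card R := by omega
      obtain ⟨r, hr⟩ := Multiset.card_pos_iff_exists_mem.1 (by omega : 0 < Multiset.card R)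
      obtain ⟨R₁, hReq⟩ := Multiset.exists_cons_of_mem hr
      have hR₁card : Multiset.card R₁ = Multiset.card R - 1 := by
        have := congrArg Multiset.card hReq
        rw [Multiset.card_cons] at this
        omega
      obtain ⟨U', hU'le, hU'0, hU'sum⟩ := Dn (R₁.map π)
        (by rw [Multiset.card_map]; omega)
      obtain ⟨U, hUle, hUmap⟩ := pullback_le_map π R₁ U' hU'le
      have hUleR : U ≤ R := by
        rw [hReq]; exact hUle.trans (Multiset.le_cons_self _ _)
      obtain ⟨V, hV⟩ := Multiset.le_iff_exists_add.1 hUleR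
      have hU0 : U ≠ 0 := by
        rintro rfl; rw [Multiset.map_zero] at hUmap; exact hU'0 hUmap.symm
      have hUsum : (U.map π).sum = 0 := by rw [hUmap]; exact hU'sum
      have hV0 : V ≠ 0 := by
        have hUcard : Multiset.card U ≤ Multiset.card R₁ := Multiset.card_le_card hUle
        have := congrArg Multiset.card hV
        rw [Multiset.card_add] at this
        intro h0
        rw [h0, Multiset.card_zero] at this
        omega
      have hVsum : (V.map π).sum = 0 := by
        have : (R.map π).sum = (U.map π).sum + (V.map π).sum := by
          rw [hV, Multiset.map_add, Multiset.sum_add]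
        rw [hRq, hUsum, zero_add] at this
        exact this.symm
      refine ⟨U ::ₘ V ::ₘ P, ?_, ?_, ?_⟩
      · rw [Multiset.sum_cons, Multiset.sum_cons, ← add_assoc, ← hV, ← hPR, add_comm R P.sum]
      · intro T hT
        rcases Multiset.mem_cons.1 hT with h | h
        · subst h; exact ⟨hU0, hUsum⟩
        rcases Multiset.mem_cons.1 h with h' | h'
        · subst h'; exact ⟨hV0, hVsum⟩
        · exact ⟨(hparts T h').1, (hparts T h').2.1⟩
      · rw [Multiset.card_cons, Multiset.card_cons]
        by_cases hkt2 : k * t ≤ 1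
        · omega
        · have hkey : n * (k * t - 2) + n * 2 = k * m := by
            rw [← Nat.mul_add]
            have h1 : k * t - 2 + 2 = k * t := by omega
            rw [h1, ← hmt]; ring
          have hRc : Multiset.card R ≤ 3 * n - 3 := by omega
          have hlt : n * (k * t - 2) < n * Multiset.card P := by omega
          have := Nat.lt_of_mul_lt_mul_left hlt
          omega
  obtain ⟨B, hBsum, hBparts, hBcard⟩ := hblocks
  set φ : Multiset (ZMod n × ZMod m) → ZMod t := fun T => ivg T.sum with hφ
  set Z : Multiset (ZMod t) := B.map φ with hZ
  have hkeyB : ∀ T ∈ B, g (φ T) = T.sum := by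
    intro T hT
    apply hsurj
    rw [map_multiset_sum π]
    exact (hBparts T hT).2
  have hZsum : Z.sum = 0 := by
    apply hginj
    rw [hZ, map_multiset_sum g, Multiset.map_map]
    have h1 : B.map (g ∘ φ) = B.map Multiset.sum :=
      Multiset.map_congr rfl (fun T hT => hkeyB T hT)
    rw [h1, ← sum_sum_eq, hBsum, hsum]
  obtain ⟨PZ, hPZsum, hPZparts, hPZcount⟩ :=
    exists_factorization (Multiset.card Z) Z le_rfl hZsum
  have hZcard : Multiset.card Z = Multiset.card B := by rw [hZ, Multiset.card_map]
  have hPZbig : k + 1 ≤ Multiset.card PZ := by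
    rw [ZMod.card t] at hPZcount
    by_contra hcon
    push_neg at hcon
    have h1 : Multiset.card PZ ≤ k := by omega
    have h2 : t * Multiset.card PZ ≤ t * k := Nat.mul_le_mul_left t h1
    have h3 : t * k = k * t := mul_comm t k
    omega
  obtain ⟨PB, hPBsum, hPBmap⟩ := pullback_partition φ PZ B (by rw [hPZsum, hZ])
  refine ⟨PB.map Multiset.sum, ?_, ?_, ?_⟩
  · rw [← sum_sum_eq, hPBsum, hBsum]
  · intro T hT
    obtain ⟨Q, hQ, rfl⟩ := Multiset.mem_map.1 hT
    have hZQ : Q.map φ ∈ PZ := by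
      rw [← hPBmap]
      exact Multiset.mem_map_of_mem _ hQ
    obtain ⟨hZQ0, hZQsum⟩ := hPZparts _ hZQ
    have hQle : Q ≤ PB.sum := mem_le_sum hQ
    have hQB : ∀ T' ∈ Q, T' ∈ B := by
      intro T' hT'
      rw [← hPBsum]
      exact Multiset.mem_of_le hQle hT'
    constructor
    · have hQ0 : Q ≠ 0 := by
        rintro rfl; rw [Multiset.map_zero] at hZQ0; exact hZQ0 rfl
      obtain ⟨T', hT'⟩ := Multiset.exists_mem_of_ne_zero hQ0
      have hT'0 : T' ≠ 0 := (hBparts T' (hQB T' hT')).1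
      intro h0
      have hle := mem_le_sum hT'
      rw [h0, Multiset.le_zero] at hle
      exact hT'0 hle
    · rw [sum_of_pullback g φ Q (fun T' hT' => hkeyB T' (hQB T' hT')), hZQsum]
      exact map_zero g
  · rw [Multiset.card_map]
    have : Multiset.card PB = Multiset.card PZ := by
      rw [← hPBmap, Multiset.card_map]
    omega
open Multiset

/-- The extremal sequence for the lower bound. -/
lemma lower_part (n m k : ℕ) (hn : 0 < n) (hm2 : 2 ≤ m) (hk : 1 ≤ k) (hnm : n ∣ m) :
    ∃ S : Multiset (ZMod n × ZMod m), S.sum = 0 ∧ Multiset.card S = k * m + n - 1 ∧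
      ∀ P : Multiset (Multiset (ZMod n × ZMod m)), P.sum = S →
        (∀ T ∈ P, T ≠ 0 ∧ Multiset.sum T = 0) → Multiset.card P ≤ k := by
  haveI : NeZero n := ⟨by omega⟩
  haveI : NeZero m := ⟨by omega⟩
  haveI : Fact (1 < m) := ⟨by omega⟩
  classical
  have hkm : 1 ≤ k * m := Nat.mul_pos hk (by omega)
  set e1 : ZMod n × ZMod m := (1, 0) with he1
  set e2 : ZMod n × ZMod m := (0, 1) with he2
  set e3 : ZMod n × ZMod m := (1, 1) with he3
  set S : Multiset (ZMod n × ZMod m) :=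
    Multiset.replicate (n - 1) e1 + Multiset.replicate (k * m - 1) e2 + {e3} with hS
  have h10 : (1 : ZMod m) ≠ 0 := one_ne_zero
  have hmem : ∀ x ∈ S, x = e1 ∨ x = e2 ∨ x = e3 := by
    intro x hx
    rw [hS] at hx
    rcases Multiset.mem_add.1 hx with h | h
    · rcases Multiset.mem_add.1 h with h' | h'
      · exact Or.inl (Multiset.eq_of_mem_replicate h')
      · exact Or.inr (Or.inl (Multiset.eq_of_mem_replicate h'))
    · exact Or.inr (Or.inr (Multiset.mem_singleton.1 h))
  have hsum : S.sum = 0 := by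
    rw [hS]
    rw [Multiset.sum_add, Multiset.sum_add, Multiset.sum_replicate, Multiset.sum_replicate,
      Multiset.sum_singleton]
    refine Prod.ext ?_ ?_
    · show (n - 1) • (1 : ZMod n) + (k * m - 1) • (0 : ZMod n) + 1 = 0
      rw [smul_zero, add_zero, nsmul_eq_mul, mul_one]
      rw [show ((n - 1 : ℕ) : ZMod n) + 1 = ((n - 1 + 1 : ℕ) : ZMod n) by push_cast; ring]
      rw [show n - 1 + 1 = n by omega]
      exact ZMod.natCast_self n
    · show (n - 1) • (0 : ZMod m) + (k * m - 1) • (1 : ZMod m) + 1 = 0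
      rw [smul_zero, zero_add, nsmul_eq_mul, mul_one]
      rw [show ((k * m - 1 : ℕ) : ZMod m) + 1 = ((k * m - 1 + 1 : ℕ) : ZMod m) by push_cast; ring]
      rw [show k * m - 1 + 1 = k * m by omega]
      rw [Nat.cast_mul, ZMod.natCast_self, mul_zero]
  have hcard : Multiset.card S = k * m + n - 1 := by
    rw [hS]
    simp only [Multiset.card_add, Multiset.card_replicate, Multiset.card_singleton]
    omega
  refine ⟨S, hsum, hcard, ?_⟩
  intro P hPsum hPparts
  set w : Multiset (ZMod n × ZMod m) → ℕ :=
    fun T => Multiset.card (T.filter (fun x => x.2 = 1)) with hw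
  -- total w-weight of S is k*m
  have hwS : w S = k * m := by
    rw [hw, hS]
    simp only [Multiset.filter_add, Multiset.card_add]
    have h1 : Multiset.filter (fun x => x.2 = 1) (Multiset.replicate (n - 1) e1) = 0 := by
      rw [Multiset.filter_eq_nil]
      intro x hx
      rw [Multiset.eq_of_mem_replicate hx, he1]
      exact fun h => h10 h.symm
    have h2 : Multiset.filter (fun x => x.2 = 1) (Multiset.replicate (k * m - 1) e2)
        = Multiset.replicate (k * m - 1) e2 := by
      rw [Multiset.filter_eq_self]
      intro x hx
      rw [Multiset.eq_of_mem_replicate hx, he2]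
    have h3 : Multiset.filter (fun x => x.2 = 1) ({e3} : Multiset (ZMod n × ZMod m))
        = {e3} := by
      rw [Multiset.filter_eq_self]
      intro x hx
      rw [Multiset.mem_singleton.1 hx, he3]
    rw [h1, h2, h3]
    simp only [Multiset.card_zero, Multiset.card_replicate, Multiset.card_singleton]
    omega
  -- every part has weight at least m
  have hpartw : ∀ T ∈ P, m ≤ w T := by
    intro T hT
    obtain ⟨hT0, hTsum⟩ := hPparts T hT
    have hTle : T ≤ S := by rw [← hPsum]; exact mem_le_sum hT
    have hTmem : ∀ x ∈ T, x = e1 ∨ x = e2 ∨ x = e3 :=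
      fun x hx => hmem x (Multiset.mem_of_le hTle hx)
    -- m divides w T
    have hdvd : m ∣ w T := by
      have hsplit := Multiset.filter_add_not (fun x => x.2 = 1) T
      have hmap1 : (Multiset.filter (fun x => x.2 = 1) T).map Prod.snd
          = Multiset.replicate (w T) (1 : ZMod m) := by
        rw [Multiset.eq_replicate]
        constructor
        · rw [Multiset.card_map, hw]
        · intro b hb
          obtain ⟨x, hx, rfl⟩ := Multiset.mem_map.1 hb
          have hfx := Multiset.of_mem_filter hx
          exact hfx
      have hmap2 : (Multiset.filter (fun x => ¬ x.2 = 1) T).map Prod.snd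
          = Multiset.replicate (Multiset.card (Multiset.filter (fun x => ¬ x.2 = 1) T))
            (0 : ZMod m) := by
        rw [Multiset.eq_replicate]
        refine ⟨by rw [Multiset.card_map], ?_⟩
        intro b hb
        obtain ⟨x, hx, rfl⟩ := Multiset.mem_map.1 hb
        have hxmem := Multiset.mem_of_mem_filter hx
        have hxne := Multiset.of_mem_filter hx
        rcases hTmem x hxmem with h | h | h
        · rw [h, he1]
        · exfalso; apply hxne; rw [h, he2]
        · exfalso; apply hxne; rw [h, he3]
      have hsnd : (T.map Prod.snd).sum = ((w T : ℕ) : ZMod m) := by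
        have : T.map Prod.snd = (Multiset.filter (fun x => x.2 = 1) T).map Prod.snd
            + (Multiset.filter (fun x => ¬ x.2 = 1) T).map Prod.snd := by
          rw [← Multiset.map_add, hsplit]
        rw [this, Multiset.sum_add, hmap1, hmap2, Multiset.sum_replicate,
          Multiset.sum_replicate, smul_zero, add_zero, nsmul_eq_mul, mul_one]
      have hsnd0 : (T.map Prod.snd).sum = 0 := by
        have h1 : (AddMonoidHom.snd (ZMod n) (ZMod m)) T.sum = 0 := by rw [hTsum]; rfl
        rw [map_multiset_sum] at h1
        exact h1
      rw [hsnd0] at hsnd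
      exact (ZMod.natCast_eq_zero_iff _ _).1 hsnd.symm
    -- w T is positive
    have hpos : 1 ≤ w T := by
      by_contra hcon
      push_neg at hcon
      have hw0 : w T = 0 := by omega
      have hall : ∀ x ∈ T, x = e1 := by
        intro x hx
        have hx2 : ¬ (x.2 = 1) := by
          intro h2
          have hxf : x ∈ T.filter (fun x => x.2 = 1) := Multiset.mem_filter.2 ⟨hx, h2⟩
          have hpos' : 0 < w T := Multiset.card_pos_iff_exists_mem.2 ⟨x, hxf⟩
          omega
        rcases hTmem x hx with h | h | h
        · exact h
        · exfalso; apply hx2; rw [h, he2]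
        · exfalso; apply hx2; rw [h, he3]
      have hrep : T = Multiset.replicate (Multiset.card T) e1 :=
        Multiset.eq_replicate_card.2 hall
      have hfst : ((Multiset.card T : ℕ) : ZMod n) = 0 := by
        have h1 : (AddMonoidHom.fst (ZMod n) (ZMod m)) T.sum = 0 := by rw [hTsum]; rfl
        rw [map_multiset_sum] at h1
        rw [hrep] at h1
        rw [Multiset.map_replicate, Multiset.sum_replicate] at h1
        have : (AddMonoidHom.fst (ZMod n) (ZMod m)) e1 = (1 : ZMod n) := rfl
        rw [this, nsmul_eq_mul, mul_one] at h1
        exact h1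
      have hndvd : n ∣ Multiset.card T := (ZMod.natCast_eq_zero_iff _ _).1 hfst
      have hTpos : 0 < Multiset.card T := Multiset.card_pos.2 hT0
      -- count of e1 in S is n - 1
      have hcount : Multiset.card T ≤ n - 1 := by
        have h1 : Multiset.card T = Multiset.count e1 T :=
          (Multiset.count_eq_card.2 (fun x hx => (hall x hx).symm)).symm
        have h2 : Multiset.count e1 T ≤ Multiset.count e1 S := Multiset.count_le_of_le e1 hTle
        have h3 : Multiset.count e1 S = n - 1 := by
          rw [hS]
          rw [Multiset.count_add, Multiset.count_add, Multiset.count_replicate,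
            Multiset.count_replicate, Multiset.count_singleton]
          have hne2 : ¬ (e1 = e2) := by
            rw [he1, he2, Prod.ext_iff]
            rintro ⟨-, h⟩
            exact h10 h.symm
          have hne3 : ¬ (e1 = e3) := by
            rw [he1, he3, Prod.ext_iff]
            rintro ⟨-, h⟩
            exact h10 h.symm
          rw [if_pos rfl, if_neg (fun h => hne2 h.symm), if_neg hne3]
          omega
        omega
      have := Nat.le_of_dvd hTpos hndvd
      omega
    exact Nat.le_of_dvd (by omega) hdvd
  -- conclude
  have htotal : (P.map w).sum = k * m := by
    have h := card_filter_sum (fun x : ZMod n × ZMod m => x.2 = 1) P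
    rw [hPsum] at h
    rw [← hwS]
    exact h.symm
  have hcount := nat_le_sum_of_forall_le (P.map w) m (by
    intro x hx
    obtain ⟨T, hT, rfl⟩ := Multiset.mem_map.1 hx
    exact hpartw T hT)
  rw [htotal, Multiset.card_map] at hcount
  have := Nat.le_of_mul_le_mul_left (by
    calc m * Multiset.card P = Multiset.card P * m := mul_comm _ _
      _ ≤ k * m := hcount
      _ = m * k := mul_comm _ _) (by omega : 0 < m)
  exact this
open Multiset

/-- The generalized Davenport constant `D_k(A)`: the maximal length of a zero-sum
sequence (multiset) over `A` that cannot be factored into more than `k` nonempty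
zero-sum subsequences. -/
noncomputable def DavK (A : Type*) [AddCommGroup A] (k : ℕ) : ℕ :=
  sSup {n : ℕ | ∃ S : Multiset A, S.sum = 0 ∧ Multiset.card S = n ∧
    ∀ P : Multiset (Multiset A), P.sum = S →
      (∀ T ∈ P, T ≠ 0 ∧ Multiset.sum T = 0) → Multiset.card P ≤ k}

/-- Halter-Koch: for `n ∣ m`, `D_k(ℤ/n × ℤ/m) = k·m + n − 1`. -/
theorem stmt3 (n m k : ℕ) (hn : 0 < n) (hm : 0 < m) (hk : 1 ≤ k) (hnm : n ∣ m) :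
    DavK (ZMod n × ZMod m) k = k * m + n - 1 := by
  by_cases hm1 : m = 1
  · -- trivial group case
    subst hm1
    have hn1 : n = 1 := Nat.dvd_one.1 hnm
    subst hn1
    have hzero : ∀ x : ZMod 1 × ZMod 1, x = 0 := fun x => Subsingleton.elim x 0
    have hset : {L : ℕ | ∃ S : Multiset (ZMod 1 × ZMod 1), S.sum = 0 ∧ Multiset.card S = L ∧
        ∀ P : Multiset (Multiset (ZMod 1 × ZMod 1)), P.sum = S →
          (∀ T ∈ P, T ≠ 0 ∧ Multiset.sum T = 0) → Multiset.card P ≤ k} = Set.Iic k := by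
      ext L
      simp only [Set.mem_setOf_eq, Set.mem_Iic]
      constructor
      · rintro ⟨S, hsum, hcard, hP⟩
        have h1 := hP (S.map (fun a => ({a} : Multiset (ZMod 1 × ZMod 1))))
          (Multiset.sum_map_singleton S) (by
            intro T hT
            obtain ⟨x, hx, rfl⟩ := Multiset.mem_map.1 hT
            exact ⟨Multiset.singleton_ne_zero x, by rw [Multiset.sum_singleton]; exact hzero x⟩)
        rw [Multiset.card_map, hcard] at h1
        exact h1
      · intro hL
        refine ⟨Multiset.replicate L 0, by rw [Multiset.sum_replicate, smul_zero],
          Multiset.card_replicate _ _, ?_⟩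
        intro P hPsum hPparts
        calc Multiset.card P ≤ Multiset.card P.sum :=
              card_le_card_sum P (fun T hT => (hPparts T hT).1)
          _ = L := by rw [hPsum, Multiset.card_replicate]
          _ ≤ k := hL
    unfold DavK
    rw [hset, csSup_Iic]
    omega
  · have hm2 : 2 ≤ m := by omega
    haveI : NeZero n := ⟨by omega⟩
    haveI : NeZero m := ⟨by omega⟩
    obtain ⟨t, hmt'⟩ := hnm
    have hmt : n * t = m := hmt'.symm
    have ht : 0 < t := by
      rcases Nat.eq_zero_or_pos t with h | h
      · rw [h, mul_zero] at hmt; omega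
      · exact h
    have hnm' : n ∣ m := Dvd.intro t hmt'.symm
    obtain ⟨S₀, hS₀sum, hS₀card, hS₀P⟩ := lower_part n m k hn hm2 hk hnm'
    have hmem0 : (k * m + n - 1) ∈ {L : ℕ | ∃ S : Multiset (ZMod n × ZMod m),
        S.sum = 0 ∧ Multiset.card S = L ∧
        ∀ P : Multiset (Multiset (ZMod n × ZMod m)), P.sum = S →
          (∀ T ∈ P, T ≠ 0 ∧ Multiset.sum T = 0) → Multiset.card P ≤ k} :=
      ⟨S₀, hS₀sum, hS₀card, hS₀P⟩
    unfold DavK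
    apply le_antisymm
    · apply csSup_le ⟨k * m + n - 1, hmem0⟩
      rintro L ⟨S, hsum, hcard, hP⟩
      by_contra hcon
      push_neg at hcon
      have hbig : k * m + n ≤ Multiset.card S := by omega
      obtain ⟨P, hPsum, hPparts, hPbig⟩ :=
        upper_part n m k t hn hm hk hnm' hmt ht S hsum hbig
      have := hP P hPsum hPparts
      omega
    · apply le_csSup ?_ hmem0
      refine ⟨Fintype.card (ZMod n × ZMod m) * k, ?_⟩
      rintro L ⟨S, hsum, hcard, hP⟩
      obtain ⟨P, hPsum, hPparts, hPcnt⟩ :=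
        exists_factorization (Multiset.card S) S le_rfl hsum
      have hPk : Multiset.card P ≤ k := hP P hPsum hPparts
      calc L = Multiset.card S := hcard.symm
        _ ≤ Fintype.card (ZMod n × ZMod m) * Multiset.card P := hPcnt
        _ ≤ Fintype.card (ZMod n × ZMod m) * k := Nat.mul_le_mul_left _ hPk
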